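/- Every frame is isomorphic to the frame of propositional sheaves on some locally cartesian 0-site (namely itself with the canonical covering relation). -/
import Mathlib


/-- A propositional sheaf on the site given by a subset `P` of a frame `α`, with the
induced covering relation. -/
def IsPropSheaf {α : Type*} [Order.Frame α] (P : Set α) (f : Set α) : Prop :=
  f ⊆ P ∧ (∀ b ∈ f, ∀ c ∈ P, c ≤ b → c ∈ f) ∧
    ∀ b ∈ P, ∀ S ⊆ P, (∀ s ∈ S, s ≤ b) → sSup S = b → S ⊆ f → b ∈ f

lemma isPropSheaf_Iic {α : Type*} [Order.Frame α] (a : α) :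
    IsPropSheaf (Set.univ : Set α) (Set.Iic a) := by
  refine ⟨Set.subset_univ _, fun b hb c _ hcb => le_trans hcb hb, ?_⟩
  intro b _ S _ hS hsup hSf
  rw [Set.mem_Iic, ← hsup]
  exact sSup_le fun s hs => hSf hs

/-- Every frame is isomorphic to the frame of propositional sheaves on some locally
cartesian 0-site: namely itself (the site `P = univ`) with the canonical covering
relation (`S` covers `b` iff `sSup S = b`). -/
theorem frame_iso_propositional_sheaves {α : Type*} [Order.Frame α] :
    Nonempty (α ≃o {f : Set α // IsPropSheaf (Set.univ : Set α) f}) := by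
  refine ⟨{ toFun := fun a => ⟨Set.Iic a, isPropSheaf_Iic a⟩
            invFun := fun f => sSup f.1
            left_inv := fun a => csSup_Iic
            right_inv := ?_
            map_rel_iff' := ?_ }⟩
  · rintro ⟨f, hsub, hdown, hsheaf⟩
    ext c
    simp only [Set.mem_Iic]
    constructor
    · intro hc
      have hf : sSup f ∈ f :=
        hsheaf _ trivial f hsub (fun s hs => le_sSup hs) rfl Set.Subset.rfl
      exact hdown _ hf c trivial hc
    · exact fun hc => le_sSup hc
  · intro a b
    exact ⟨fun h => h le_rfl, fun h _ hc => le_trans hc h⟩
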